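/- Define A_n ∈ R^{n×n} whose i-th row for i ∈ [n-1] is (0,...,0, 1, -1/(n-i),...,-1/(n-i)) (with i-1 leading zeros) and whose n-th row is zero, and B_n ∈ R^{n×n} whose i-th row is (0,...,0, 1/(n+1-i),...,1/(n+1-i)) (with i-1 leading zeros). Then the Moore–Penrose pseudoinverse of A_n equals I_n - B_n^T. -/

import Mathlib

open Finset Matrix

/-- The lower-averaging matrix `B_n`: (1-based) entry `(i,j)` equals `1/(n+1-i)` for `j ≥ i`,
and `0` otherwise. -/
noncomputable def lowerAvg (n : ℕ) : Matrix (Fin n) (Fin n) ℝ :=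
  Matrix.of fun i j => if i ≤ j then (1 : ℝ) / ((n : ℝ) - (i : ℕ)) else 0

/-- The matrix `A_n`: (1-based) row `i ∈ [n-1]` is `(0_{i-1}, 1, -1/(n-i)·1_{n-i})`, and the
`n`-th row is zero. -/
noncomputable def diffMat (n : ℕ) : Matrix (Fin n) (Fin n) ℝ :=
  Matrix.of fun i j =>
    if (i : ℕ) + 1 < n then
      (if j = i then (1 : ℝ)
        else if i < j then -(1 : ℝ) / ((n : ℝ) - 1 - (i : ℕ)) else 0)
    else 0

-- counting helper
lemma sum_ite_le_Ico (a b c : ℕ) (d : ℝ) (h : c ≤ a) :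
    ∑ k ∈ Finset.Ico a b, (if c ≤ k then d else 0) = ((b - a : ℕ) : ℝ) * d := by
  rw [Finset.sum_congr rfl (fun k hk => if_pos (h.trans (Finset.mem_Ico.1 hk).1))]
  simp [Nat.card_Ico, mul_comm]

lemma sum_ite_le_Ico' (a b c : ℕ) (d : ℝ) (h1 : a ≤ c) (h2 : c ≤ b) :
    ∑ k ∈ Finset.Ico a b, (if c ≤ k then d else 0) = ((b - c : ℕ) : ℝ) * d := by
  rw [← Finset.sum_Ico_consecutive _ h1 h2, sum_ite_le_Ico c b c d le_rfl,
    Finset.sum_congr rfl (fun k hk => if_neg (by exact Nat.not_le.2 (Finset.mem_Ico.1 hk).2))]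
  simp

lemma aux_AX (n : ℕ) (hn : 2 ≤ n) :
    diffMat n * ((1 : Matrix (Fin n) (Fin n) ℝ) - (lowerAvg n)ᵀ) =
      Matrix.of (fun i j : Fin n => if i = j ∧ (i : ℕ) + 1 < n then (1 : ℝ) else 0) := by
  ext i j
  rw [Matrix.mul_apply]
  have hsum : (∑ k : Fin n, diffMat n i k * ((1 : Matrix (Fin n) (Fin n) ℝ) - (lowerAvg n)ᵀ) k j) =
      ∑ m ∈ Finset.range n,
        ((if (i : ℕ) + 1 < n then
          (if m = (i : ℕ) then (1 : ℝ)
            else if (i : ℕ) < m then -1 / ((n : ℝ) - 1 - (i : ℕ)) else 0) else 0) *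
        ((if m = (j : ℕ) then 1 else 0) -
          (if (j : ℕ) ≤ m then 1 / ((n : ℝ) - (j : ℕ)) else 0))) := by
    rw [← Fin.sum_univ_eq_sum_range]
    refine Finset.sum_congr rfl fun k _ => ?_
    simp only [diffMat, lowerAvg, Matrix.of_apply, Matrix.sub_apply, Matrix.one_apply,
      Matrix.transpose_apply, Fin.ext_iff, Fin.lt_def, Fin.le_def]
  rw [hsum]
  by_cases hi : (i : ℕ) + 1 < n
  · simp only [if_pos hi]
    have hNi : (n : ℝ) - 1 - (i : ℕ) ≠ 0 := by
      have h' : ((i : ℕ) : ℝ) + 1 < (n : ℝ) := by exact_mod_cast hi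
      intro h; nlinarith
    have hNj : (n : ℝ) - (j : ℕ) ≠ 0 := by
      have h' : ((j : ℕ) : ℝ) < (n : ℝ) := by exact_mod_cast j.isLt
      intro h; nlinarith
    rw [Finset.range_eq_Ico, ← Finset.sum_Ico_consecutive _ (Nat.zero_le ((i:ℕ) + 1)) hi.le]
    have h1 : ∑ m ∈ Finset.Ico 0 ((i:ℕ) + 1),
        ((if m = (i:ℕ) then (1 : ℝ) else if (i:ℕ) < m then -1 / ((n : ℝ) - 1 - (i : ℕ)) else 0) *
          ((if m = (j:ℕ) then 1 else 0) - (if (j:ℕ) ≤ m then 1 / ((n : ℝ) - (j : ℕ)) else 0))) =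
        ((if (i:ℕ) = (j:ℕ) then (1:ℝ) else 0) -
          (if (j:ℕ) ≤ (i:ℕ) then 1 / ((n : ℝ) - (j : ℕ)) else 0)) := by
      rw [Finset.sum_congr rfl (fun m hm => ?_), Finset.sum_ite_eq' (Finset.Ico 0 ((i:ℕ)+1)) (i:ℕ)
        (fun m => ((if m = (j:ℕ) then (1:ℝ) else 0) -
          (if (j:ℕ) ≤ m then 1 / ((n : ℝ) - (j : ℕ)) else 0)))]
      · simp
      · have hm' := (Finset.mem_Ico.1 hm).2
        split_ifs with h h' <;> first | rfl | omega | (exfalso; omega) | simp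
    have h2 : ∑ m ∈ Finset.Ico ((i:ℕ) + 1) n,
        ((if m = (i:ℕ) then (1 : ℝ) else if (i:ℕ) < m then -1 / ((n : ℝ) - 1 - (i : ℕ)) else 0) *
          ((if m = (j:ℕ) then 1 else 0) - (if (j:ℕ) ≤ m then 1 / ((n : ℝ) - (j : ℕ)) else 0))) =
        (-1 / ((n : ℝ) - 1 - (i : ℕ))) * ∑ m ∈ Finset.Ico ((i:ℕ) + 1) n,
          ((if m = (j:ℕ) then (1:ℝ) else 0) - (if (j:ℕ) ≤ m then 1 / ((n : ℝ) - (j : ℕ)) else 0)) := by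
      rw [Finset.mul_sum]
      refine Finset.sum_congr rfl (fun m hm => ?_)
      have hm' := (Finset.mem_Ico.1 hm).1
      split_ifs with h h' <;> first | rfl | omega
    rw [h1, h2, Finset.sum_sub_distrib, Finset.sum_ite_eq' (Finset.Ico ((i:ℕ)+1) n) (j:ℕ)
      (fun _ => (1:ℝ))]
    rcases le_or_gt (j:ℕ) (i:ℕ) with hji | hij
    · have hmem : (j:ℕ) ∉ Finset.Ico ((i:ℕ)+1) n := by
        simp only [Finset.mem_Ico, not_and, not_lt]; omega
      rw [sum_ite_le_Ico ((i:ℕ)+1) n (j:ℕ) _ (by omega), if_neg hmem]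
      have hcast : ((n - ((i:ℕ) + 1) : ℕ) : ℝ) = (n : ℝ) - 1 - (i:ℕ) := by
        push_cast [Nat.cast_sub hi.le]; ring
      rw [hcast, if_pos hji]
      have hkey : (-1 / ((n : ℝ) - 1 - (i : ℕ))) *
          (0 - ((n : ℝ) - 1 - (i:ℕ)) * (1 / ((n : ℝ) - (j : ℕ)))) = 1 / ((n : ℝ) - (j : ℕ)) := by
        field_simp
        ring
      rw [hkey]
      by_cases hq : i = j
      · subst hq; simp [Matrix.of_apply, hi]
      · have hq' : ¬ ((i:ℕ) = (j:ℕ)) := fun h => hq (Fin.ext h)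
        rw [if_neg hq']
        simp [Matrix.of_apply, hq]
    · have hmem : (j:ℕ) ∈ Finset.Ico ((i:ℕ)+1) n := Finset.mem_Ico.2 ⟨hij, j.isLt⟩
      rw [sum_ite_le_Ico' ((i:ℕ)+1) n (j:ℕ) _ hij j.isLt.le, if_pos hmem]
      have hcast : ((n - (j:ℕ) : ℕ) : ℝ) = (n : ℝ) - (j:ℕ) := by
        push_cast [Nat.cast_sub j.isLt.le]; ring
      rw [hcast, if_neg (show ¬ ((i:ℕ) = (j:ℕ)) by omega), if_neg (show ¬ ((j:ℕ) ≤ (i:ℕ)) by omega)]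
      have hkey : (-1 / ((n : ℝ) - 1 - (i : ℕ))) *
          (1 - ((n : ℝ) - (j:ℕ)) * (1 / ((n : ℝ) - (j : ℕ)))) = 0 := by
        field_simp
        ring
      rw [hkey]
      have hq : ¬ (i = j) := fun h => by rw [h] at hij; omega
      simp [Matrix.of_apply, hq]
  · simp [hi, Matrix.of_apply]

lemma tele (n b : ℕ) (hb : b < n) :
    ∑ m ∈ Finset.range b, ((1:ℝ) / ((n:ℝ) - m)) * (-1 / ((n:ℝ) - 1 - m)) =
      -1 / ((n:ℝ) - b) + 1 / (n:ℝ) := by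
  have h : ∀ m ∈ Finset.range b, ((1:ℝ) / ((n:ℝ) - m)) * (-1 / ((n:ℝ) - 1 - m)) =
      (fun t : ℕ => -1 / ((n:ℝ) - t)) (m + 1) - (fun t : ℕ => -1 / ((n:ℝ) - t)) m := by
    intro m hm
    have hm' : m + 1 < n := by have := Finset.mem_range.1 hm; omega
    have c2 : ((m:ℝ)) + 1 < (n:ℝ) := by exact_mod_cast hm'
    have d1 : (0:ℝ) < (n:ℝ) - m := by linarith
    have d2 : (0:ℝ) < (n:ℝ) - 1 - m := by linarith
    have e1 : (n:ℝ) - m ≠ 0 := ne_of_gt d1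
    have e2 : (n:ℝ) - 1 - m ≠ 0 := ne_of_gt d2
    have e3 : (n:ℝ) - ((m:ℝ) + 1) ≠ 0 := by intro h; apply e2; linarith
    simp only
    push_cast
    field_simp
    ring
  rw [Finset.sum_congr rfl h, Finset.sum_range_sub (fun t : ℕ => -1 / ((n:ℝ) - t)) b]
  push_cast
  ring

lemma aux_XA (n : ℕ) (hn : 2 ≤ n) :
    ((1 : Matrix (Fin n) (Fin n) ℝ) - (lowerAvg n)ᵀ) * diffMat n =
      Matrix.of (fun i j : Fin n => (if i = j then (1 : ℝ) else 0) - 1 / n) := by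
  have hN0 : (0:ℝ) < (n : ℝ) := by positivity
  ext i j
  rw [Matrix.mul_apply]
  have hsum : (∑ k : Fin n, ((1 : Matrix (Fin n) (Fin n) ℝ) - (lowerAvg n)ᵀ) i k * diffMat n k j) =
      ∑ m ∈ Finset.range n,
        (((if (i : ℕ) = m then (1:ℝ) else 0) - (if m ≤ (i : ℕ) then 1 / ((n : ℝ) - m) else 0)) *
          (if m + 1 < n then
            (if (j : ℕ) = m then (1 : ℝ)
              else if m < (j : ℕ) then -1 / ((n : ℝ) - 1 - m) else 0) else 0)) := by
    rw [← Fin.sum_univ_eq_sum_range]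
    refine Finset.sum_congr rfl fun k _ => ?_
    simp only [diffMat, lowerAvg, Matrix.of_apply, Matrix.sub_apply, Matrix.one_apply,
      Matrix.transpose_apply, Fin.ext_iff, Fin.lt_def, Fin.le_def]
  rw [hsum]
  have hiv := i.isLt
  have hjv := j.isLt
  rw [Finset.range_eq_Ico, ← Finset.sum_Ico_consecutive _ (Nat.zero_le ((i:ℕ) + 1)) hiv]
  have h2 : ∑ m ∈ Finset.Ico ((i:ℕ) + 1) n,
      (((if (i : ℕ) = m then (1:ℝ) else 0) - (if m ≤ (i : ℕ) then 1 / ((n : ℝ) - m) else 0)) *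
        (if m + 1 < n then
          (if (j : ℕ) = m then (1 : ℝ)
            else if m < (j : ℕ) then -1 / ((n : ℝ) - 1 - m) else 0) else 0)) = 0 := by
    refine Finset.sum_eq_zero fun m hm => ?_
    have hm' := (Finset.mem_Ico.1 hm).1
    rw [if_neg (show ¬ (i:ℕ) = m by omega), if_neg (show ¬ m ≤ (i:ℕ) by omega)]
    ring
  rw [h2, add_zero]
  have hcong : ∀ m ∈ Finset.Ico 0 ((i:ℕ) + 1),
      (((if (i : ℕ) = m then (1:ℝ) else 0) - (if m ≤ (i : ℕ) then 1 / ((n : ℝ) - m) else 0)) *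
        (if m + 1 < n then
          (if (j : ℕ) = m then (1 : ℝ)
            else if m < (j : ℕ) then -1 / ((n : ℝ) - 1 - m) else 0) else 0)) =
      (if (i:ℕ) = m then
        (if m + 1 < n then
          (if (j : ℕ) = m then (1 : ℝ)
            else if m < (j : ℕ) then -1 / ((n : ℝ) - 1 - m) else 0) else 0) else 0) -
      (1 / ((n : ℝ) - m)) *
        (if m + 1 < n then
          (if (j : ℕ) = m then (1 : ℝ)
            else if m < (j : ℕ) then -1 / ((n : ℝ) - 1 - m) else 0) else 0) := by
    intro m hm
    have hm' := (Finset.mem_Ico.1 hm).2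
    rw [if_pos (show m ≤ (i:ℕ) by omega), sub_mul, ite_mul, one_mul, zero_mul]
  rw [Finset.sum_congr rfl hcong, Finset.sum_sub_distrib,
    Finset.sum_ite_eq (Finset.Ico 0 ((i:ℕ)+1)) (i:ℕ), if_pos (by simp)]
  rcases lt_or_ge (i:ℕ) (j:ℕ) with hij | hji
  · -- i < j
    have hT : ∑ m ∈ Finset.Ico 0 ((i:ℕ) + 1),
        ((1 / ((n : ℝ) - m)) *
          (if m + 1 < n then
            (if (j : ℕ) = m then (1 : ℝ)
              else if m < (j : ℕ) then -1 / ((n : ℝ) - 1 - m) else 0) else 0)) =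
        -1 / ((n:ℝ) - ((i:ℕ)+1 : ℕ)) + 1 / (n:ℝ) := by
      have hc2 : ∀ m ∈ Finset.range ((i:ℕ)+1),
          ((1 / ((n : ℝ) - m)) *
            (if m + 1 < n then
              (if (j : ℕ) = m then (1 : ℝ)
                else if m < (j : ℕ) then -1 / ((n : ℝ) - 1 - m) else 0) else 0)) =
          ((1:ℝ) / ((n:ℝ) - m)) * (-1 / ((n:ℝ) - 1 - m)) := by
        intro m hm
        have hm' := Finset.mem_range.1 hm
        rw [if_pos (show m + 1 < n by omega), if_neg (show ¬ (j:ℕ) = m by omega),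
          if_pos (show m < (j:ℕ) by omega)]
      rw [← Finset.range_eq_Ico, Finset.sum_congr rfl hc2, tele n ((i:ℕ)+1) (by omega)]
    rw [hT, if_pos (show (i:ℕ)+1 < n by omega), if_neg (show ¬ (j:ℕ) = (i:ℕ) by omega),
      if_pos hij]
    have hq : ¬ (i = j) := fun h => by rw [h] at hij; omega
    simp only [Matrix.of_apply, if_neg hq]
    push_cast
    ring
  · -- j ≤ i
    rw [← Finset.sum_Ico_consecutive _ (Nat.zero_le (j:ℕ)) (show (j:ℕ) ≤ (i:ℕ)+1 by omega)]
    have hTa : ∑ m ∈ Finset.Ico 0 (j:ℕ),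
        ((1 / ((n : ℝ) - m)) *
          (if m + 1 < n then
            (if (j : ℕ) = m then (1 : ℝ)
              else if m < (j : ℕ) then -1 / ((n : ℝ) - 1 - m) else 0) else 0)) =
        -1 / ((n:ℝ) - (j:ℕ)) + 1 / (n:ℝ) := by
      have hc2 : ∀ m ∈ Finset.range (j:ℕ),
          ((1 / ((n : ℝ) - m)) *
            (if m + 1 < n then
              (if (j : ℕ) = m then (1 : ℝ)
                else if m < (j : ℕ) then -1 / ((n : ℝ) - 1 - m) else 0) else 0)) =
          ((1:ℝ) / ((n:ℝ) - m)) * (-1 / ((n:ℝ) - 1 - m)) := by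
        intro m hm
        have hm' := Finset.mem_range.1 hm
        rw [if_pos (show m + 1 < n by omega), if_neg (show ¬ (j:ℕ) = m by omega),
          if_pos (show m < (j:ℕ) by omega)]
      rw [← Finset.range_eq_Ico, Finset.sum_congr rfl hc2, tele n (j:ℕ) hjv]
    have hTb : ∑ m ∈ Finset.Ico (j:ℕ) ((i:ℕ)+1),
        ((1 / ((n : ℝ) - m)) *
          (if m + 1 < n then
            (if (j : ℕ) = m then (1 : ℝ)
              else if m < (j : ℕ) then -1 / ((n : ℝ) - 1 - m) else 0) else 0)) =
        (if (j:ℕ) + 1 < n then 1 / ((n:ℝ) - (j:ℕ)) else 0) := by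
      have hc2 : ∀ m ∈ Finset.Ico (j:ℕ) ((i:ℕ)+1),
          ((1 / ((n : ℝ) - m)) *
            (if m + 1 < n then
              (if (j : ℕ) = m then (1 : ℝ)
                else if m < (j : ℕ) then -1 / ((n : ℝ) - 1 - m) else 0) else 0)) =
          (if (j:ℕ) = m then (if (j:ℕ) + 1 < n then 1 / ((n:ℝ) - (j:ℕ)) else 0) else 0) := by
        intro m hm
        have hm' := (Finset.mem_Ico.1 hm).1
        rcases eq_or_ne (j:ℕ) m with he | he
        · subst he
          by_cases h3 : (j:ℕ) + 1 < n
          · rw [if_pos h3, if_pos rfl, if_pos rfl, if_pos h3, mul_one]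
          · rw [if_neg h3, if_pos rfl, if_neg h3, mul_zero]
        · rw [if_neg he, if_neg he, if_neg (show ¬ m < (j:ℕ) by omega), ite_self, mul_zero]
      rw [Finset.sum_congr rfl hc2,
        Finset.sum_ite_eq (Finset.Ico (j:ℕ) ((i:ℕ)+1)) (j:ℕ)
          (fun _ => (if (j:ℕ) + 1 < n then 1 / ((n:ℝ) - (j:ℕ)) else 0)),
        if_pos (Finset.mem_Ico.2 ⟨le_rfl, by omega⟩)]
    rw [hTa, hTb, if_neg (show ¬ (i:ℕ) < (j:ℕ) by omega)]
    by_cases hj2 : (j:ℕ) + 1 < n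
    · rw [if_pos hj2]
      by_cases hq : i = j
      · subst hq
        rw [if_pos (by omega : (i:ℕ)+1 < n), if_pos rfl]
        simp only [Matrix.of_apply, if_pos rfl]
        norm_num
        ring
      · have hq' : ¬ ((j:ℕ) = (i:ℕ)) := fun h => hq (Fin.ext h.symm)
        rw [if_neg hq', ite_self]
        simp only [Matrix.of_apply, if_neg hq]
        ring
    · rw [if_neg hj2, if_neg (show ¬ (i:ℕ)+1 < n by omega)]
      have hq : i = j := Fin.ext (by omega)
      have hc : ((j:ℕ) : ℝ) = (n:ℝ) - 1 := by
        have h4 : (j:ℕ) + 1 = n := by omega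
        have := congrArg (fun t : ℕ => (t : ℝ)) h4
        push_cast at this
        linarith
      rw [hc]
      simp only [Matrix.of_apply, if_pos hq]
      norm_num
      ring

lemma col_sum (n : ℕ) (hn : 2 ≤ n) (j : Fin n) :
    ∑ k : Fin n, ((1 : Matrix (Fin n) (Fin n) ℝ) - (lowerAvg n)ᵀ) k j = 0 := by
  have hsum : ∑ k : Fin n, ((1 : Matrix (Fin n) (Fin n) ℝ) - (lowerAvg n)ᵀ) k j =
      ∑ m ∈ Finset.range n,
        ((if m = (j : ℕ) then (1:ℝ) else 0) -
          (if (j : ℕ) ≤ m then 1 / ((n : ℝ) - (j : ℕ)) else 0)) := by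
    rw [← Fin.sum_univ_eq_sum_range]
    refine Finset.sum_congr rfl fun k _ => ?_
    simp only [lowerAvg, Matrix.of_apply, Matrix.sub_apply, Matrix.one_apply,
      Matrix.transpose_apply, Fin.ext_iff, Fin.le_def]
  have hNj : (n : ℝ) - (j : ℕ) ≠ 0 := by
    have h' : ((j : ℕ) : ℝ) < (n : ℝ) := by exact_mod_cast j.isLt
    intro h; nlinarith
  rw [hsum, Finset.sum_sub_distrib,
    Finset.sum_ite_eq' (Finset.range n) (j:ℕ) (fun _ => (1:ℝ)),
    if_pos (Finset.mem_range.2 j.isLt), Finset.range_eq_Ico,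
    sum_ite_le_Ico' 0 n (j:ℕ) _ (Nat.zero_le _) j.isLt.le]
  have hcast : ((n - (j:ℕ) : ℕ) : ℝ) = (n : ℝ) - (j:ℕ) := by
    push_cast [Nat.cast_sub j.isLt.le]; ring
  rw [hcast]
  field_simp
  simp

/-- The Moore–Penrose pseudoinverse of `A_n` is `I - Bₙᵀ`, expressed via the
four Penrose conditions (which uniquely characterize the Moore–Penrose pseudoinverse):
`A X A = A`, `X A X = X`, `(A X)ᵀ = A X` and `(X A)ᵀ = X A` for `X = I - Bₙᵀ`. -/
theorem diffMat_pinv (n : ℕ) (hn : 2 ≤ n) :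
    diffMat n * ((1 : Matrix (Fin n) (Fin n) ℝ) - (lowerAvg n)ᵀ) * diffMat n = diffMat n ∧
    ((1 : Matrix (Fin n) (Fin n) ℝ) - (lowerAvg n)ᵀ) * diffMat n *
        ((1 : Matrix (Fin n) (Fin n) ℝ) - (lowerAvg n)ᵀ) =
      (1 : Matrix (Fin n) (Fin n) ℝ) - (lowerAvg n)ᵀ ∧
    (diffMat n * ((1 : Matrix (Fin n) (Fin n) ℝ) - (lowerAvg n)ᵀ))ᵀ =
      diffMat n * ((1 : Matrix (Fin n) (Fin n) ℝ) - (lowerAvg n)ᵀ) ∧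
    (((1 : Matrix (Fin n) (Fin n) ℝ) - (lowerAvg n)ᵀ) * diffMat n)ᵀ =
      ((1 : Matrix (Fin n) (Fin n) ℝ) - (lowerAvg n)ᵀ) * diffMat n := by
  refine ⟨?_, ?_, ?_, ?_⟩
  · rw [aux_AX n hn]
    ext i j
    rw [Matrix.mul_apply]
    by_cases hi : (i : ℕ) + 1 < n
    · simp [Matrix.of_apply, hi]
    · simp [Matrix.of_apply, hi, diffMat]
  · rw [aux_XA n hn]
    ext i j
    rw [Matrix.mul_apply,
      Finset.sum_congr rfl (fun k (_ : k ∈ Finset.univ) => by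
        rw [Matrix.of_apply, sub_mul, ite_mul, one_mul, zero_mul]),
      Finset.sum_sub_distrib, Finset.sum_ite_eq Finset.univ i, if_pos (Finset.mem_univ i),
      ← Finset.mul_sum, col_sum n hn j, mul_zero, sub_zero]
  · rw [aux_AX n hn]
    ext i j
    simp only [Matrix.transpose_apply, Matrix.of_apply]
    by_cases h : i = j
    · subst h; rfl
    · rw [if_neg (fun hc => h hc.1.symm), if_neg (fun hc => h hc.1)]
  · rw [aux_XA n hn]
    ext i j
    simp only [Matrix.transpose_apply, Matrix.of_apply]
    by_cases h : i = j
    · subst h; rfl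
    · rw [if_neg (fun hc => h hc.symm), if_neg h]
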